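/- For a finite monoid M which is not a group, the set N of elements of M that are not right invertible is a nonempty proper right ideal of M, and N belongs to the dense Grothendieck topology on M. -/

import Mathlib

/-- For a finite monoid `M` which is not a group, the set `N` of elements of `M` that are
not right invertible is a nonempty proper right ideal of `M`, and `N` belongs to the
dense Grothendieck topology on `M`: for every `m ∈ M` there is `n` with `m * n ∈ N`. -/
theorem non_right_invertible_ideal
    (M : Type) [Monoid M] [Finite M] (h : ∃ m : M, ¬ IsUnit m) :
    let N : Set M := {m : M | ¬ ∃ n : M, m * n = 1}
    N.Nonempty ∧ N ≠ Set.univ ∧ (∀ a ∈ N, ∀ b : M, a * b ∈ N) ∧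
      (∀ m : M, ∃ n : M, m * n ∈ N) := by
  intro N
  -- In a finite monoid, right invertible implies unit
  have key : ∀ m : M, (∃ n : M, m * n = 1) → IsUnit m := by
    rintro m ⟨n, hn⟩
    have hsurj : Function.Surjective (fun x : M => m * x) := fun y =>
      ⟨n * y, by simp [← mul_assoc, hn]⟩
    have hinj : Function.Injective (fun x : M => m * x) :=
      Finite.injective_iff_surjective.mpr hsurj
    have : n * m = 1 := by
      apply hinj
      show m * (n * m) = m * 1
      rw [← mul_assoc, hn, one_mul, mul_one]
    exact ⟨⟨m, n, hn, this⟩, rfl⟩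
  obtain ⟨m₀, hm₀⟩ := h
  have hm₀N : m₀ ∈ N := fun hex => hm₀ (key m₀ hex)
  refine ⟨⟨m₀, hm₀N⟩, ?_, ?_, ?_⟩
  · intro hN
    have : (1 : M) ∈ N := hN ▸ Set.mem_univ 1
    exact this ⟨1, one_mul 1⟩
  · rintro a ha b ⟨c, hc⟩
    exact ha ⟨b * c, by rw [← mul_assoc, hc]⟩
  · intro m
    by_cases hm : m ∈ N
    · exact ⟨1, by simpa using hm⟩
    · refine ⟨m₀, fun hex => hm₀ ?_⟩
      obtain ⟨u, rfl⟩ := key m (not_not.mp hm)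
      have hmm := key _ hex
      have : m₀ = ↑u⁻¹ * (↑u * m₀) := by rw [← mul_assoc]; simp
      rw [this]
      exact (Units.isUnit u⁻¹).mul hmm
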